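/- Let M ∈ ℝ^{d×d} be a Metzler matrix. Then M is Hurwitz stable if and only if there exists a vector v ∈ ℝ^d with all entries positive such that vᵀM has all entries negative. -/

import Mathlib

open Matrix Filter

def Metzler {d : ℕ} (M : Matrix (Fin d) (Fin d) ℝ) : Prop :=
  ∀ i j, i ≠ j → 0 ≤ M i j

def HurwitzStable {d : ℕ} (M : Matrix (Fin d) (Fin d) ℝ) : Prop :=
  ∀ μ ∈ spectrum ℂ (M.map Complex.ofReal), μ.re < 0

lemma backward {d : ℕ} (M : Matrix (Fin d) (Fin d) ℝ) (hM : Metzler M)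
    (v : Fin d → ℝ) (hv : ∀ i, 0 < v i) (hvM : ∀ j, (v ᵥ* M) j < 0)
    (μ : ℂ) (hμ : μ ∈ spectrum ℂ (M.map Complex.ofReal)) : μ.re < 0 := by
  -- get eigenvector
  rw [← AlgEquiv.spectrum_eq (Matrix.toLinAlgEquiv' (R := ℂ) (n := Fin d))] at hμ
  obtain ⟨x, hx⟩ := (Module.End.hasEigenvalue_iff_mem_spectrum.mpr hμ).exists_hasEigenvector
  have heig : (M.map Complex.ofReal) *ᵥ x = μ • x := by
    have := hx.apply_eq_smul
    rwa [Matrix.toLinAlgEquiv'_apply] at this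
  have hx0 : x ≠ 0 := hx.2
  set w : Fin d → ℝ := fun i => ‖x i‖ with hw
  have hw0 : ∀ i, 0 ≤ w i := fun i => norm_nonneg _
  -- key componentwise inequality
  have key : ∀ j, μ.re * w j ≤ ∑ k, M j k * w k := by
    intro j
    have hj : ∑ k, (M j k : ℂ) * x k = μ * x j := by
      have := congrFun heig j
      simpa [Matrix.mulVec, dotProduct, Matrix.map_apply] using this
    have h2 : μ.re * (w j)^2 ≤ (∑ k, M j k * w k) * w j := by
      have hre : (μ * x j * (starRingEnd ℂ) (x j)).re = μ.re * (w j)^2 := by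
        rw [mul_assoc, Complex.mul_conj]
        simp only [hw, Complex.sq_norm]
        simp [Complex.mul_re]
      have hre2 : (μ * x j * (starRingEnd ℂ) (x j)).re
          = ∑ k, ((M j k : ℂ) * x k * (starRingEnd ℂ) (x j)).re := by
        rw [← Complex.re_sum]
        congr 1
        rw [← Finset.sum_mul, hj]
      have hterm : ∀ k, ((M j k : ℂ) * x k * (starRingEnd ℂ) (x j)).re
          ≤ M j k * (w k * w j) := by
        intro k
        rcases eq_or_ne k j with rfl | hkj
        · rw [mul_assoc, Complex.mul_conj, ← Complex.ofReal_mul, Complex.ofReal_re]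
          simp only [hw]
          rw [Complex.normSq_eq_norm_sq, sq]
        · have h1 : ((M j k : ℂ) * x k * (starRingEnd ℂ) (x j)).re
              ≤ ‖((M j k : ℂ) * x k * (starRingEnd ℂ) (x j))‖ :=
            Complex.re_le_norm _
          have h2 : ‖((M j k : ℂ) * x k * (starRingEnd ℂ) (x j))‖
              = |M j k| * (w k * w j) := by
            simp only [norm_mul, hw, Complex.norm_real, Real.norm_eq_abs, Complex.norm_conj]
            ring
          rw [h2] at h1
          rw [abs_of_nonneg (hM j k (Ne.symm hkj))] at h1
          exact h1
      calc μ.re * (w j)^2 = (μ * x j * (starRingEnd ℂ) (x j)).re := hre.symm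
        _ = ∑ k, ((M j k : ℂ) * x k * (starRingEnd ℂ) (x j)).re := hre2
        _ ≤ ∑ k, M j k * (w k * w j) := Finset.sum_le_sum fun k _ => hterm k
        _ = (∑ k, M j k * w k) * w j := by rw [Finset.sum_mul]; congr 1; ext k; ring
    rcases eq_or_lt_of_le (hw0 j) with h0 | hpos
    · rw [← h0, mul_zero]
      apply Finset.sum_nonneg
      intro k _
      rcases eq_or_ne k j with rfl | hkj
      · rw [← h0, mul_zero]
      · exact mul_nonneg (hM j k (Ne.symm hkj)) (hw0 k)
    · have := h2
      rw [sq] at this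
      rw [← mul_le_mul_iff_left₀ hpos]
      linarith [this]
  -- sum against v
  have hS : 0 < ∑ j, v j * w j := by
    obtain ⟨j0, hj0⟩ : ∃ j, x j ≠ 0 := by
      by_contra h
      push_neg at h
      exact hx0 (funext h)
    have hwj0 : 0 < w j0 := by
      rw [hw]; simpa [AbsoluteValue.pos_iff] using hj0
    apply Finset.sum_pos'
    · exact fun i _ => mul_nonneg (hv i).le (hw0 i)
    · exact ⟨j0, Finset.mem_univ j0, mul_pos (hv j0) hwj0⟩
  have hT : (∑ k, (v ᵥ* M) k * w k) < 0 := by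
    obtain ⟨j0, hj0⟩ : ∃ j, x j ≠ 0 := by
      by_contra h
      push_neg at h
      exact hx0 (funext h)
    have hwj0 : 0 < w j0 := by
      rw [hw]; simpa [AbsoluteValue.pos_iff] using hj0
    have : ∀ k ∈ Finset.univ, (v ᵥ* M) k * w k ≤ (0 : ℝ) := fun k _ =>
      mul_nonpos_of_nonpos_of_nonneg (hvM k).le (hw0 k)
    calc (∑ k, (v ᵥ* M) k * w k)
        ≤ ∑ k ∈ Finset.univ \ {j0}, (v ᵥ* M) k * w k + (v ᵥ* M) j0 * w j0 := by
          rw [Finset.sum_eq_sum_sdiff_singleton_add (Finset.mem_univ j0)]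
      _ < 0 := by
          have h1 : ∑ k ∈ Finset.univ \ {j0}, (v ᵥ* M) k * w k ≤ 0 :=
            Finset.sum_nonpos fun k hk => this k (Finset.mem_univ k)
          have h2 : (v ᵥ* M) j0 * w j0 < 0 := mul_neg_of_neg_of_pos (hvM j0) hwj0
          linarith
  have hmain : μ.re * (∑ j, v j * w j) ≤ ∑ k, (v ᵥ* M) k * w k := by
    calc μ.re * (∑ j, v j * w j) = ∑ j, v j * (μ.re * w j) := by
          rw [Finset.mul_sum]; congr 1; ext j; ring
      _ ≤ ∑ j, v j * (∑ k, M j k * w k) :=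
          Finset.sum_le_sum fun j _ => mul_le_mul_of_nonneg_left (key j) (hv j).le
      _ = ∑ k, (v ᵥ* M) k * w k := by
          simp_rw [Finset.mul_sum, Matrix.vecMul, dotProduct, Finset.sum_mul]
          rw [Finset.sum_comm]
          congr 1; ext k; congr 1; ext j; ring
  nlinarith

attribute [local instance] Matrix.linftyOpNormedRing Matrix.linftyOpNormedAlgebra

variable {d : ℕ}

lemma entry_norm_le (A : Matrix (Fin d) (Fin d) ℂ) (i j : Fin d) : ‖A i j‖ ≤ ‖A‖ := by
  rw [Matrix.linfty_opNorm_def]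
  calc ‖A i j‖ ≤ ∑ k, ‖A i k‖ := Finset.single_le_sum (f := fun k => ‖A i k‖)
        (fun k _ => norm_nonneg _) (Finset.mem_univ j)
    _ ≤ _ := by
        have := Finset.le_sup (f := fun i : Fin d => ∑ k, ‖A i k‖₊) (Finset.mem_univ i)
        have h2 : ((∑ k, ‖A i k‖₊ : NNReal) : ℝ) ≤ ((Finset.univ.sup fun i : Fin d => ∑ k, ‖A i k‖₊ : NNReal) : ℝ) := by
          exact_mod_cast this
        simpa [NNReal.coe_sum] using h2

lemma exists_pow_norm_lt_one (hd : 0 < d) (A : Matrix (Fin d) (Fin d) ℂ)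
    (h : ∀ μ ∈ spectrum ℂ A, ‖μ‖₊ < 1) : ∃ n, 0 < n ∧ ‖A ^ n‖ < 1 := by
  haveI : Nonempty (Fin d) := ⟨⟨0, hd⟩⟩
  haveI : CompleteSpace (Matrix (Fin d) (Fin d) ℂ) := FiniteDimensional.complete ℂ _
  have hρ : spectralRadius ℂ A < 1 := by
    have := spectrum.spectralRadius_lt_of_forall_lt A (r := 1) h
    simpa using this
  have hg := spectrum.pow_nnnorm_pow_one_div_tendsto_nhds_spectralRadius A
  have hev : ∀ᶠ n : ℕ in atTop, (‖A ^ n‖₊ : ENNReal) ^ (1 / (n:ℝ)) < 1 :=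
    hg.eventually_lt_const hρ
  obtain ⟨n, hn, hn1⟩ := (hev.and (eventually_gt_atTop 0)).exists
  refine ⟨n, hn1, ?_⟩
  have hlt : (‖A ^ n‖₊ : ENNReal) < 1 := by
    by_contra hge
    push_neg at hge
    have : (1 : ENNReal) ^ (1 / (n:ℝ)) ≤ (‖A ^ n‖₊ : ENNReal) ^ (1 / (n:ℝ)) :=
      ENNReal.rpow_le_rpow hge (by positivity)
    rw [ENNReal.one_rpow] at this
    exact absurd hn (not_lt.mpr this)
  have : ‖A ^ n‖₊ < 1 := by exact_mod_cast hlt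
  exact_mod_cast this

lemma pow_entry_nonneg (C : Matrix (Fin d) (Fin d) ℝ) (hC : ∀ i j, 0 ≤ C i j) :
    ∀ n, ∀ i j, 0 ≤ (C ^ n) i j := by
  intro n
  induction n with
  | zero => intro i j; rw [pow_zero]; by_cases h : i = j <;> simp [Matrix.one_apply, h]
  | succ n ih =>
      intro i j
      rw [pow_succ, Matrix.mul_apply]
      exact Finset.sum_nonneg fun k _ => mul_nonneg (ih i k) (hC k j)

lemma map_pow_ofReal (C : Matrix (Fin d) (Fin d) ℝ) (n : ℕ) :
    (C ^ n).map Complex.ofReal = (C.map Complex.ofReal) ^ n := by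
  have : ∀ B : Matrix (Fin d) (Fin d) ℝ, B.map Complex.ofReal =
      (Complex.ofRealHom.mapMatrix : Matrix (Fin d) (Fin d) ℝ →+* Matrix (Fin d) (Fin d) ℂ) B :=
    fun B => rfl
  rw [this, this, map_pow]

lemma inv_one_sub_nonneg (hd : 0 < d) (C : Matrix (Fin d) (Fin d) ℝ)
    (hC : ∀ i j, 0 ≤ C i j)
    (hspec : ∀ μ ∈ spectrum ℂ (C.map Complex.ofReal), ‖μ‖₊ < 1) :
    IsUnit (1 - C).det ∧ ∀ i j, 0 ≤ (1 - C)⁻¹ i j := by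
  have hmapsub : (1 - C).map Complex.ofReal = 1 - C.map Complex.ofReal := by
    have : ∀ B : Matrix (Fin d) (Fin d) ℝ, B.map Complex.ofReal =
        (Complex.ofRealHom.mapMatrix : Matrix (Fin d) (Fin d) ℝ →+* Matrix (Fin d) (Fin d) ℂ) B :=
      fun B => rfl
    rw [this, this, map_sub, _root_.map_one]
  -- invertibility
  have h1 : (1 : ℂ) ∉ spectrum ℂ (C.map Complex.ofReal) := fun h => by simpa using hspec 1 h
  rw [spectrum.notMem_iff] at h1
  rw [_root_.map_one] at h1
  have hdetC : IsUnit ((1 - C.map Complex.ofReal).det) :=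
    (Matrix.isUnit_iff_isUnit_det _).mp h1
  rw [← hmapsub] at hdetC
  rw [show ((1 - C).map Complex.ofReal).det = Complex.ofReal ((1 - C).det) from
    (RingHom.map_det Complex.ofRealHom _).symm] at hdetC
  have hdet : IsUnit (1 - C).det := by
    rw [isUnit_iff_ne_zero] at hdetC ⊢
    intro h
    exact hdetC (by rw [h]; simp)
  refine ⟨hdet, ?_⟩
  set N := (1 - C)⁻¹ with hN
  have hmul : (1 - C) * N = 1 := Matrix.mul_nonsing_inv _ hdet
  have hgeom : ∀ m, (∑ k ∈ Finset.range m, C ^ k) = N - C ^ m * N := by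
    intro m
    have h1 : (∑ k ∈ Finset.range m, C ^ k) * (C - 1) = C ^ m - 1 := geom_sum_mul C m
    have h2 : (∑ k ∈ Finset.range m, C ^ k) * (1 - C) = 1 - C ^ m := by
      have := congrArg Neg.neg h1
      rw [← mul_neg, neg_sub, neg_sub] at this
      exact this
    calc (∑ k ∈ Finset.range m, C ^ k)
        = (∑ k ∈ Finset.range m, C ^ k) * ((1 - C) * N) := by rw [hmul, mul_one]
      _ = ((∑ k ∈ Finset.range m, C ^ k) * (1 - C)) * N := by rw [mul_assoc]
      _ = (1 - C ^ m) * N := by rw [h2]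
      _ = N - C ^ m * N := by rw [sub_mul, one_mul]
  intro i j
  -- N i j ≥ (C^m * N) i j for all m
  have hlow : ∀ m, (C ^ m * N) i j ≤ N i j := by
    intro m
    have := congrFun (congrFun (hgeom m) i) j
    have hsum : 0 ≤ (∑ k ∈ Finset.range m, C ^ k) i j := by
      rw [Matrix.sum_apply]
      exact Finset.sum_nonneg fun k _ => pow_entry_nonneg C hC k i j
    rw [this] at hsum
    simpa [Matrix.sub_apply] using hsum
  -- powers tend to zero entrywise along a subsequence
  obtain ⟨n₀, hn₀, hc⟩ := exists_pow_norm_lt_one hd (C.map Complex.ofReal) hspec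
  set c := ‖(C.map Complex.ofReal) ^ n₀‖ with hcdef
  have hc0 : 0 ≤ c := norm_nonneg _
  set K := ∑ k, |N k j| with hK
  have hbound : ∀ t : ℕ, 0 < t → |(C ^ (n₀ * t) * N) i j| ≤ K * c ^ t := by
    intro t ht
    have hentry : ∀ a b : Fin d, |(C ^ (n₀ * t)) a b| ≤ c ^ t := by
      intro a b
      have h1 : ‖((C.map Complex.ofReal) ^ (n₀ * t)) a b‖ ≤ ‖(C.map Complex.ofReal) ^ (n₀ * t)‖ :=
        entry_norm_le _ a b
      have h2 : ((C.map Complex.ofReal) ^ (n₀ * t)) a b = Complex.ofReal ((C ^ (n₀ * t)) a b) := by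
        rw [← map_pow_ofReal]; rfl
      rw [h2, Complex.norm_real, Real.norm_eq_abs] at h1
      have h3 : ‖(C.map Complex.ofReal) ^ (n₀ * t)‖ ≤ c ^ t := by
        rw [pow_mul]
        exact norm_pow_le' _ ht
      linarith
    calc |(C ^ (n₀ * t) * N) i j| = |∑ k, (C ^ (n₀ * t)) i k * N k j| := by
          rw [Matrix.mul_apply]
      _ ≤ ∑ k, |(C ^ (n₀ * t)) i k * N k j| := Finset.abs_sum_le_sum_abs _ _
      _ ≤ ∑ k, c ^ t * |N k j| := by
          refine Finset.sum_le_sum fun k _ => ?_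
          rw [abs_mul]
          exact mul_le_mul_of_nonneg_right (hentry i k) (abs_nonneg _)
      _ = K * c ^ t := by rw [hK, Finset.sum_mul]; exact Finset.sum_congr rfl fun k _ => by ring
  have htend : Tendsto (fun t : ℕ => (C ^ (n₀ * t) * N) i j) atTop (nhds 0) := by
    apply squeeze_zero_norm' (a := fun t => K * c ^ t)
    · filter_upwards [eventually_gt_atTop 0] with t ht
      simpa [Real.norm_eq_abs] using hbound t ht
    · rw [show (0:ℝ) = K * 0 by ring]
      exact (tendsto_pow_atTop_nhds_zero_of_lt_one hc0 hc).const_mul K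
  exact le_of_tendsto' htend fun t => hlow (n₀ * t)

lemma forward {d : ℕ} (M : Matrix (Fin d) (Fin d) ℝ) (hM : Metzler M)
    (hH : HurwitzStable M) :
    ∃ v : Fin d → ℝ, (∀ i, 0 < v i) ∧ ∀ j, (v ᵥ* M) j < 0 := by
  rcases Nat.eq_zero_or_pos d with rfl | hd
  · exact ⟨fun _ => 1, fun i => i.elim0, fun j => j.elim0⟩
  -- choose s
  have hfin : (spectrum ℂ (M.map Complex.ofReal)).Finite := Matrix.finite_spectrum _
  obtain ⟨s₁, hs₁⟩ := (hfin.image fun μ => ‖μ‖^2 / (-(2 * μ.re))).bddAbove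
  obtain ⟨s₂, hs₂⟩ := (Set.finite_range fun i : Fin d => -M i i).bddAbove
  set s : ℝ := max (max s₁ s₂) 0 + 1 with hs
  have hs_pos : 0 < s := by
    have : (0:ℝ) ≤ max (max s₁ s₂) 0 := le_max_right _ _
    linarith
  have hsdiag : ∀ i, -M i i < s := by
    intro i
    have h1 : -M i i ≤ s₂ := hs₂ ⟨i, rfl⟩
    have h2 : s₂ ≤ max (max s₁ s₂) 0 := le_trans (le_max_right s₁ s₂) (le_max_left _ _)
    linarith
  have hskey : ∀ μ ∈ spectrum ℂ (M.map Complex.ofReal), ‖μ‖^2 / (-(2 * μ.re)) < s := by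
    intro μ hμ
    have h1 : ‖μ‖^2 / (-(2 * μ.re)) ≤ s₁ := hs₁ ⟨μ, hμ, rfl⟩
    have h2 : s₁ ≤ max (max s₁ s₂) 0 := le_trans (le_max_left s₁ s₂) (le_max_left _ _)
    linarith
  -- the matrices A and C
  set A : Matrix (Fin d) (Fin d) ℝ := M + s • 1 with hA
  set C : Matrix (Fin d) (Fin d) ℝ := s⁻¹ • A with hCdef
  have hC : ∀ i j, 0 ≤ C i j := by
    intro i j
    rcases eq_or_ne i j with rfl | hij
    · have : C i i = s⁻¹ * (M i i + s) := by
        simp [hCdef, hA, Matrix.add_apply, Matrix.smul_apply, Matrix.one_apply]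
        ring
      rw [this]
      have h1 : 0 < M i i + s := by linarith [hsdiag i]
      exact mul_nonneg (inv_nonneg.mpr hs_pos.le) h1.le
    · have : C i j = s⁻¹ * M i j := by
        simp [hCdef, hA, Matrix.add_apply, Matrix.smul_apply, Matrix.one_apply, hij]
      rw [this]
      exact mul_nonneg (inv_nonneg.mpr hs_pos.le) (hM i j hij)
  -- spectrum of C
  have hAmap : A.map Complex.ofReal
      = algebraMap ℂ (Matrix (Fin d) (Fin d) ℂ) (s : ℂ) + M.map Complex.ofReal := by
    rw [Algebra.algebraMap_eq_smul_one]
    ext i j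
    rcases eq_or_ne i j with rfl | hij
    · simp [hA, Matrix.add_apply, Matrix.smul_apply, Matrix.one_apply, Matrix.map_apply]
      try ring
    · simp [hA, Matrix.add_apply, Matrix.smul_apply, Matrix.one_apply, Matrix.map_apply, hij]
  have hCmap : C.map Complex.ofReal = ((s : ℂ)⁻¹) • (A.map Complex.ofReal) := by
    ext i j
    simp [hCdef, Matrix.smul_apply, Matrix.map_apply, Complex.ofReal_mul]
  have hspecC : ∀ ν ∈ spectrum ℂ (C.map Complex.ofReal), ‖ν‖₊ < 1 := by
    intro ν hν
    have hsne : ((s:ℂ))⁻¹ ≠ 0 := by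
      simp only [ne_eq, inv_eq_zero, Complex.ofReal_eq_zero]
      exact hs_pos.ne'
    rw [hCmap] at hν
    rw [show ((s:ℂ))⁻¹ • (A.map Complex.ofReal)
        = (Units.mk0 _ hsne : ℂˣ) • (A.map Complex.ofReal) from rfl,
      spectrum.unit_smul_eq_smul] at hν
    obtain ⟨μ', hμ', rfl⟩ := hν
    rw [hAmap, ← spectrum.singleton_add_eq, Set.singleton_add, Set.mem_image] at hμ'
    obtain ⟨μ, hμ, rfl⟩ := hμ'
    have hre : μ.re < 0 := hH μ hμ
    have hpos2 : (0:ℝ) < -(2 * μ.re) := by linarith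
    have hkey : ‖μ‖^2 < s * (-(2 * μ.re)) := (div_lt_iff₀ hpos2).mp (hskey μ hμ)
    have hnormμ : ‖μ‖^2 = μ.re^2 + μ.im^2 := by
      rw [Complex.sq_norm, Complex.normSq_apply]; ring
    have hlt : ‖(s:ℂ) + μ‖ < s := by
      have hsq : ‖(s:ℂ) + μ‖^2 = (s + μ.re)^2 + μ.im^2 := by
        rw [Complex.sq_norm, Complex.normSq_apply]
        simp [Complex.add_re, Complex.add_im]
        try ring
      nlinarith [norm_nonneg ((s:ℂ) + μ), hs_pos]
    have hfin : ‖((s:ℂ))⁻¹ * ((s:ℂ) + μ)‖ < 1 := by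
      rw [norm_mul, norm_inv, Complex.norm_real, Real.norm_eq_abs, abs_of_pos hs_pos]
      calc s⁻¹ * ‖(s:ℂ) + μ‖ < s⁻¹ * s :=
            mul_lt_mul_of_pos_left hlt (inv_pos.mpr hs_pos)
        _ = 1 := inv_mul_cancel₀ hs_pos.ne'
    simp only [Units.smul_def, Units.val_mk0, smul_eq_mul]
    exact_mod_cast hfin
  -- apply the inverse lemma
  obtain ⟨hdet, hNpos⟩ := inv_one_sub_nonneg hd C hC hspecC
  set N := (1 - C)⁻¹ with hNdef
  have hNmul : N * (1 - C) = 1 := Matrix.nonsing_inv_mul _ hdet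
  have h1C : (1 : Matrix (Fin d) (Fin d) ℝ) - C = (-(s⁻¹)) • M := by
    ext i j
    rcases eq_or_ne i j with rfl | hij
    · simp [hCdef, hA, Matrix.sub_apply, Matrix.add_apply, Matrix.smul_apply, Matrix.one_apply]
      field_simp
      ring
    · simp [hCdef, hA, Matrix.sub_apply, Matrix.add_apply, Matrix.smul_apply,
        Matrix.one_apply, hij]
  have hNM : N * M = (-s) • 1 := by
    have h2 : (-(s⁻¹)) • (N * M) = 1 := by rw [← Matrix.mul_smul, ← h1C, hNmul]
    have h3 := congrArg (fun B : Matrix (Fin d) (Fin d) ℝ => (-s) • B) h2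
    simp only [smul_smul] at h3
    have hss : (-s) * (-(s⁻¹)) = 1 := by field_simp
    rw [hss, one_smul] at h3
    rw [h3]
  have hNdet : N.det ≠ 0 := by
    have hu : IsUnit N := ⟨⟨N, 1 - C, hNmul, Matrix.mul_nonsing_inv _ hdet⟩, rfl⟩
    have := (Matrix.isUnit_iff_isUnit_det N).mp hu
    exact this.ne_zero
  refine ⟨fun j => ∑ i, N i j, ?_, ?_⟩
  · intro j
    have hnn : 0 ≤ ∑ i, N i j := Finset.sum_nonneg fun i _ => hNpos i j
    rcases eq_or_lt_of_le hnn with h0 | h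
    · exfalso
      have hcol : ∀ i, N i j = 0 := by
        have := (Finset.sum_eq_zero_iff_of_nonneg
          (fun i _ => hNpos i j)).mp h0.symm
        exact fun i => this i (Finset.mem_univ i)
      exact hNdet (Matrix.det_eq_zero_of_column_eq_zero j hcol)
    · exact h
  · intro j
    have hcalc : ((fun j => ∑ i, N i j) ᵥ* M) j = ∑ k, (N * M) k j := by
      simp only [Matrix.vecMul, dotProduct, Matrix.mul_apply, Finset.sum_mul]
      exact Finset.sum_comm
    rw [hcalc, hNM]
    have : ∑ k, ((-s) • (1 : Matrix (Fin d) (Fin d) ℝ)) k j = -s := by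
      simp [Matrix.smul_apply, Matrix.one_apply]
    rw [this]
    linarith


theorem stmt3 {d : ℕ} (M : Matrix (Fin d) (Fin d) ℝ) (hM : Metzler M) :
    HurwitzStable M ↔
      ∃ v : Fin d → ℝ, (∀ i, 0 < v i) ∧ ∀ j, (v ᵥ* M) j < 0 := by
  constructor
  · exact fun hH => forward M hM hH
  · rintro ⟨v, hv, hvM⟩ μ hμ
    exact backward M hM v hv hvM μ hμ
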